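/- Let e : [0,∞) → ℝ^N and K̃ : [0,∞) → ℝ^{m×N} be differentiable functions satisfying ė(t) = (A_m + B L*) e(t) + B K̃(t) x(t) and the adaptive law K̃'(t) = −W⁻¹ Bᵀ P e(t) x(t)ᵀ, where P, Q ∈ ℝ^{N×N} are symmetric positive definite with (A_m + B L*)ᵀ P + P (A_m + B L*) = −Q and W ∈ ℝ^{m×m} is symmetric positive definite. Then the function V(t) = ½ e(t)ᵀ P e(t) + ½ tr(K̃(t)ᵀ W K̃(t)) is differentiable with derivative V'(t) = −½ e(t)ᵀ Q e(t) for all t ≥ 0. -/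

import Mathlib

open Matrix Filter Set MeasureTheory

noncomputable section

attribute [local instance] Matrix.frobeniusNormedAddCommGroup Matrix.frobeniusNormedSpace

section helpers

variable {E F : Type*} [NormedAddCommGroup E] [NormedSpace ℝ E]
  [NormedAddCommGroup F] [NormedSpace ℝ F]

/-- Continuous bilinear map from a bilinear `LinearMap` in finite dimensions. -/
noncomputable def bilCLM [FiniteDimensional ℝ E] [FiniteDimensional ℝ F]
    (b : E →ₗ[ℝ] F →ₗ[ℝ] ℝ) : E →L[ℝ] F →L[ℝ] ℝ :=
  LinearMap.toContinuousLinearMap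
    (((LinearMap.toContinuousLinearMap : (F →ₗ[ℝ] ℝ) ≃ₗ[ℝ] (F →L[ℝ] ℝ)) :
        (F →ₗ[ℝ] ℝ) →ₗ[ℝ] (F →L[ℝ] ℝ)).comp b)

@[simp] lemma bilCLM_apply [FiniteDimensional ℝ E] [FiniteDimensional ℝ F]
    (b : E →ₗ[ℝ] F →ₗ[ℝ] ℝ) (u : E) (v : F) : bilCLM b u v = b u v := rfl

lemma hasDerivAt_bilin (b : E →L[ℝ] F →L[ℝ] ℝ) {f : ℝ → E} {g : ℝ → F}
    {f' : E} {g' : F} {t : ℝ} (hf : HasDerivAt f f' t) (hg : HasDerivAt g g' t) :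
    HasDerivAt (fun τ => b (f τ) (g τ)) (b f' (g t) + b (f t) g') t := by
  have h1 : HasDerivAt (fun τ => b (f τ)) (b f') t :=
    b.hasFDerivAt.comp_hasDerivAt t hf
  simpa using h1.clm_apply hg

lemma trace_mul_vecMulVec {n k : ℕ} (M : Matrix (Fin n) (Fin k) ℝ) (v : Fin k → ℝ)
    (w : Fin n → ℝ) : (M * vecMulVec v w).trace = w ⬝ᵥ M.mulVec v := by
  simp only [Matrix.trace, Matrix.diag, Matrix.mul_apply, vecMulVec_apply, dotProduct,
    Matrix.mulVec, Finset.mul_sum]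
  refine Finset.sum_congr rfl fun i _ => Finset.sum_congr rfl fun j _ => ?_
  ring

/-- The scalar algebraic identity behind the Lyapunov derivative computation. -/
lemma lyap_alg {N m : ℕ}
    (Am : Matrix (Fin N) (Fin N) ℝ) (B : Matrix (Fin N) (Fin m) ℝ)
    (Lstar : Matrix (Fin m) (Fin N) ℝ)
    (P Q : Matrix (Fin N) (Fin N) ℝ) (W : Matrix (Fin m) (Fin m) ℝ)
    (hP : P.PosDef) (hW : W.PosDef)
    (hLyap : (Am + B * Lstar)ᵀ * P + P * (Am + B * Lstar) = -Q)
    (v xx : Fin N → ℝ) (K : Matrix (Fin m) (Fin N) ℝ) :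
    (1/2 : ℝ) * (((Am + B * Lstar).mulVec v + (B * K).mulVec xx) ⬝ᵥ P.mulVec v
        + v ⬝ᵥ P.mulVec ((Am + B * Lstar).mulVec v + (B * K).mulVec xx))
      + (1/2) * (((-(W⁻¹ * Bᵀ * P * vecMulVec v xx))ᵀ * W * K).trace
        + (Kᵀ * W * (-(W⁻¹ * Bᵀ * P * vecMulVec v xx))).trace)
      = -(1/2) * (v ⬝ᵥ Q.mulVec v) := by
  set A := Am + B * Lstar with hA
  have hWs : Wᵀ = W := by
    have := hW.isHermitian
    rwa [Matrix.IsHermitian, conjTranspose_eq_transpose_of_trivial] at this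
  have hPs : Pᵀ = P := by
    have := hP.isHermitian
    rwa [Matrix.IsHermitian, conjTranspose_eq_transpose_of_trivial] at this
  have hWinv : W * W⁻¹ = 1 :=
    Matrix.mul_nonsing_inv W (isUnit_iff_ne_zero.mpr hW.det_pos.ne')
  have ht2 : (Kᵀ * W * (-(W⁻¹ * Bᵀ * P * vecMulVec v xx))).trace
      = -((B * K).mulVec xx ⬝ᵥ P.mulVec v) := by
    have h1 : Kᵀ * W * (W⁻¹ * Bᵀ * P * vecMulVec v xx)
        = (Kᵀ * Bᵀ * P) * vecMulVec v xx := by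
      rw [show W⁻¹ * Bᵀ * P * vecMulVec v xx = W⁻¹ * (Bᵀ * P * vecMulVec v xx) by
        simp [Matrix.mul_assoc]]
      rw [Matrix.mul_assoc (Kᵀ) W, ← Matrix.mul_assoc W, hWinv, Matrix.one_mul]
      simp [Matrix.mul_assoc]
    rw [Matrix.mul_neg, Matrix.trace_neg, h1, trace_mul_vecMulVec]
    congr 1
    rw [show Kᵀ * Bᵀ * P = (B * K)ᵀ * P by rw [Matrix.transpose_mul],
      ← Matrix.mulVec_mulVec, Matrix.dotProduct_mulVec, Matrix.vecMul_transpose]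
  have ht1 : ((-(W⁻¹ * Bᵀ * P * vecMulVec v xx))ᵀ * W * K).trace
      = -((B * K).mulVec xx ⬝ᵥ P.mulVec v) := by
    rw [← Matrix.trace_transpose, Matrix.transpose_mul, Matrix.transpose_mul,
      Matrix.transpose_transpose, hWs, ← Matrix.mul_assoc, ht2]
  have hq1 : A.mulVec v ⬝ᵥ P.mulVec v + v ⬝ᵥ P.mulVec (A.mulVec v)
      = -(v ⬝ᵥ Q.mulVec v) := by
    have h1 : A.mulVec v ⬝ᵥ P.mulVec v = v ⬝ᵥ (Aᵀ * P).mulVec v := by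
      rw [← Matrix.mulVec_mulVec, Matrix.dotProduct_mulVec v, Matrix.vecMul_transpose,
        dotProduct_comm, Matrix.dotProduct_mulVec]
    have h2 : v ⬝ᵥ P.mulVec (A.mulVec v) = v ⬝ᵥ (P * A).mulVec v := by
      rw [Matrix.mulVec_mulVec]
    rw [h1, h2, ← dotProduct_add, ← Matrix.add_mulVec, hLyap, Matrix.neg_mulVec,
      dotProduct_neg]
  have hq2 : v ⬝ᵥ P.mulVec ((B * K).mulVec xx) = (B * K).mulVec xx ⬝ᵥ P.mulVec v := by
    rw [Matrix.dotProduct_mulVec v,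
      show v ᵥ* P = P *ᵥ v from by rw [← Matrix.mulVec_transpose, hPs],
      dotProduct_comm]
  rw [ht1, ht2, add_dotProduct, Matrix.mulVec_add, dotProduct_add, hq2]
  linarith [hq1]

end helpers

/-- along the error dynamics `ė = (A_m + B L*) e + B K̃ x` and the adaptive
law `K̃' = -W⁻¹ Bᵀ P e xᵀ`, where `(A_m + B L*)ᵀ P + P (A_m + B L*) = -Q`, the Lyapunov
function `V = ½ eᵀ P e + ½ tr(K̃ᵀ W K̃)` is differentiable with `V' = -½ eᵀ Q e`. -/
theorem lyapunov_derivative_adaptive {N m : ℕ}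
    (Am : Matrix (Fin N) (Fin N) ℝ) (B : Matrix (Fin N) (Fin m) ℝ)
    (Lstar : Matrix (Fin m) (Fin N) ℝ)
    (P Q : Matrix (Fin N) (Fin N) ℝ) (W : Matrix (Fin m) (Fin m) ℝ)
    (hP : P.PosDef) (hQ : Q.PosDef) (hW : W.PosDef)
    (hLyap : (Am + B * Lstar)ᵀ * P + P * (Am + B * Lstar) = -Q)
    (x : ℝ → EuclideanSpace ℝ (Fin N))
    (e : ℝ → EuclideanSpace ℝ (Fin N))
    (Ktilde : ℝ → Matrix (Fin m) (Fin N) ℝ)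
    (he : ∀ t : ℝ, 0 ≤ t → HasDerivAt e
      (WithLp.toLp 2 ((Am + B * Lstar).mulVec (e t) + (B * Ktilde t).mulVec (x t))) t)
    (hK : ∀ t : ℝ, 0 ≤ t → HasDerivAt Ktilde
      (-(W⁻¹ * Bᵀ * P * vecMulVec (e t) (x t))) t) :
    ∀ t : ℝ, 0 ≤ t → HasDerivAt
      (fun τ : ℝ => (1 / 2) * (e τ ⬝ᵥ P.mulVec (e τ)) +
        (1 / 2) * ((Ktilde τ)ᵀ * W * Ktilde τ).trace)
      (-(1 / 2) * (e t ⬝ᵥ Q.mulVec (e t))) t := by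
  intro t ht
  set bq : EuclideanSpace ℝ (Fin N) →ₗ[ℝ] EuclideanSpace ℝ (Fin N) →ₗ[ℝ] ℝ :=
    LinearMap.mk₂ ℝ (fun u v => u ⬝ᵥ P.mulVec v)
      (fun u u' v => add_dotProduct u u' _)
      (fun c u v => smul_dotProduct c u _)
      (fun u v v' => by
        have h : P.mulVec (v + v') = P.mulVec v + P.mulVec v' := Matrix.mulVec_add ..
        simp only [WithLp.ofLp_add, h, dotProduct_add])
      (fun c u v => by
        have h : P.mulVec (c • v) = c • P.mulVec v := Matrix.mulVec_smul ..
        simp only [WithLp.ofLp_smul, h, dotProduct_smul, smul_eq_mul]) with hbq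
  set bt : Matrix (Fin m) (Fin N) ℝ →ₗ[ℝ] Matrix (Fin m) (Fin N) ℝ →ₗ[ℝ] ℝ :=
    LinearMap.mk₂ ℝ (fun A C => (Aᵀ * W * C).trace)
      (fun A A' C => by simp [Matrix.transpose_add, Matrix.add_mul, Matrix.trace_add])
      (fun c A C => by simp [Matrix.transpose_smul, Matrix.smul_mul, Matrix.trace_smul])
      (fun A C C' => by simp [Matrix.mul_add, Matrix.trace_add])
      (fun c A C => by simp [Matrix.mul_smul, Matrix.trace_smul]) with hbt
  have he' := he t ht
  have hK' := hK t ht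
  have hmain : HasDerivAt
      (fun τ : ℝ => (1 / 2) * (bilCLM bq (e τ) (e τ)) +
        (1 / 2) * (bilCLM bt (Ktilde τ) (Ktilde τ)))
      ((1 / 2) * (bilCLM bq _ (e t) + bilCLM bq (e t) _) +
        (1 / 2) * (bilCLM bt _ (Ktilde t) + bilCLM bt (Ktilde t) _)) t :=
    ((hasDerivAt_bilin _ he' he').const_mul _).add
      ((hasDerivAt_bilin _ hK' hK').const_mul _)
  have key : ((1 / 2) * (bilCLM bq (WithLp.toLp 2 ((Am + B * Lstar).mulVec (e t) + (B * Ktilde t).mulVec (x t))) (e t)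
        + bilCLM bq (e t) (WithLp.toLp 2 ((Am + B * Lstar).mulVec (e t) + (B * Ktilde t).mulVec (x t)))) +
      (1 / 2) * (bilCLM bt (-(W⁻¹ * Bᵀ * P * vecMulVec (e t) (x t))) (Ktilde t)
        + bilCLM bt (Ktilde t) (-(W⁻¹ * Bᵀ * P * vecMulVec (e t) (x t)))))
      = -(1 / 2) * (e t ⬝ᵥ Q.mulVec (e t)) := by
    simp only [bilCLM_apply, hbq, hbt, LinearMap.mk₂_apply, WithLp.ofLp_toLp]
    exact lyap_alg Am B Lstar P Q W hP hW hLyap (e t) (x t) (Ktilde t)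
  exact key ▸ hmain

end
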